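/- For every odd integer n ≥ 5, there exists an edge-friendly labeling f of the crown graph K_n × K_2 such that |v_f(0) − v_f(1)| = 2n−8; that is, 2n−8 ∈ EBI(K_n × K_2). -/

import Mathlib

open SimpleGraph

/-- The lexicographic product (composition) `G[H]`. -/
def lexProd {α β : Type*} (G : SimpleGraph α) (H : SimpleGraph β) :
    SimpleGraph (α × β) where
  Adj x y := G.Adj x.1 y.1 ∨ (x.1 = y.1 ∧ H.Adj x.2 y.2)
  symm := ⟨fun x y h =>
    h.elim (fun h' => Or.inl h'.symm) (fun ⟨he, h2⟩ => Or.inr ⟨he.symm, h2.symm⟩)⟩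
  loopless := ⟨fun x h =>
    h.elim (G.loopless.irrefl x.1) (fun ⟨_, h2⟩ => H.loopless.irrefl x.2 h2)⟩

/-- The direct (tensor, Kronecker) product `G × H`. -/
def tensorProd {α β : Type*} (G : SimpleGraph α) (H : SimpleGraph β) :
    SimpleGraph (α × β) where
  Adj x y := G.Adj x.1 y.1 ∧ H.Adj x.2 y.2
  symm := ⟨fun _ _ ⟨h1, h2⟩ => ⟨h1.symm, h2.symm⟩⟩
  loopless := ⟨fun x h => G.loopless.irrefl x.1 h.1⟩

/-- The number of edges labeled `i` by the edge labeling `f`. -/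
noncomputable def edgeCount {V : Type*} (G : SimpleGraph V) (f : G.edgeSet → ZMod 2) (i : ZMod 2) : ℕ :=
  Nat.card {e : G.edgeSet // f e = i}

/-- The number of edges incident to `v` that are labeled `i` (the `i`-degree of `v`). -/
noncomputable def labDeg {V : Type*} (G : SimpleGraph V) (f : G.edgeSet → ZMod 2) (i : ZMod 2) (v : V) : ℕ :=
  Nat.card {e : G.edgeSet // f e = i ∧ v ∈ (e : Sym2 V)}

/-- The number of vertices whose induced (partial) label is `i`: those incident to strictly
more `i`-edges than `(1-i)`-edges. -/
noncomputable def vertexCount {V : Type*} (G : SimpleGraph V) (f : G.edgeSet → ZMod 2) (i : ZMod 2) : ℕ :=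
  Nat.card {v : V // labDeg G f (1 - i) v < labDeg G f i v}

/-- An edge labeling (a surjective function onto `ZMod 2`) is edge-friendly if
`|e_f(0) - e_f(1)| ≤ 1`. -/
def EdgeFriendly {V : Type*} (G : SimpleGraph V) (f : G.edgeSet → ZMod 2) : Prop :=
  Function.Surjective f ∧ |(edgeCount G f 0 : ℤ) - (edgeCount G f 1 : ℤ)| ≤ 1

/-- A graph is strongly edge-balanced if some edge-friendly labeling `f` satisfies
`v_f(0) = v_f(1)` and `e_f(0) = e_f(1)`. -/
def StronglyEdgeBalanced {V : Type*} (G : SimpleGraph V) : Prop :=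
  ∃ f : G.edgeSet → ZMod 2, EdgeFriendly G f ∧
    vertexCount G f 0 = vertexCount G f 1 ∧ edgeCount G f 0 = edgeCount G f 1

/-- `|v_f(0) - v_f(1)|` for an edge labeling `f`. -/
noncomputable def ebIndex {V : Type*} (G : SimpleGraph V) (f : G.edgeSet → ZMod 2) : ℕ :=
  ((vertexCount G f 0 : ℤ) - (vertexCount G f 1 : ℤ)).natAbs

/-- The edge-balanced index set of `G`. -/
def EBI {V : Type*} (G : SimpleGraph V) : Set ℕ :=
  {k | ∃ f : G.edgeSet → ZMod 2, EdgeFriendly G f ∧ ebIndex G f = k}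

/-- The crown graph `K_n × K_2`: the direct product of the complete graph on `n` vertices
with `K_2`; `(u,a)` is adjacent to `(v,b)` iff `u ≠ v` and `a ≠ b`. -/
def crown (n : ℕ) : SimpleGraph (Fin n × Fin 2) :=
  tensorProd (⊤ : SimpleGraph (Fin n)) (⊤ : SimpleGraph (Fin 2))

namespace CrownAux
open Finset

variable {n : ℕ}

lemma f01 : (0:Fin 2) ≠ 1 := by decide
lemma f10 : (1:Fin 2) ≠ 0 := by decide

lemma crown_adj {x y : Fin n × Fin 2} : (crown n).Adj x y ↔ x.1 ≠ y.1 ∧ x.2 ≠ y.2 := Iff.rfl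

variable (b : Fin n → Fin n → ZMod 2)

def gf : Fin n × Fin 2 → Fin n × Fin 2 → ZMod 2 := fun x y =>
  if x.2 = 0 ∧ y.2 = 1 then b x.1 y.1
  else if x.2 = 1 ∧ y.2 = 0 then b y.1 x.1 else 0

lemma gf_symm : ∀ x y, gf b x y = gf b y x := by
  rintro ⟨x1, x2⟩ ⟨y1, y2⟩
  rcases (show x2 = 0 ∨ x2 = 1 by omega) with rfl | rfl <;>
    rcases (show y2 = 0 ∨ y2 = 1 by omega) with rfl | rfl <;> simp [gf]

def F : (crown n).edgeSet → ZMod 2 := fun e => Sym2.lift ⟨gf b, gf_symm b⟩ e.val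

lemma edge_mem (u v : Fin n) (h : u ≠ v) :
    s((u, (0:Fin 2)), (v, (1:Fin 2))) ∈ (crown n).edgeSet := by
  rw [SimpleGraph.mem_edgeSet, crown_adj]
  exact ⟨h, f01⟩

lemma F_mk (u v : Fin n) (h : s((u, (0:Fin 2)), (v, (1:Fin 2))) ∈ (crown n).edgeSet) :
    F b ⟨s((u, (0:Fin 2)), (v, (1:Fin 2))), h⟩ = b u v := by
  simp [F, gf]

lemma labDeg_row (i : ZMod 2) (u : Fin n) :
    labDeg (crown n) (F b) i (u, (0:Fin 2)) =
      #(univ.filter fun v : Fin n => u ≠ v ∧ b u v = i) := by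
  have hb : Function.Bijective (fun v : {v : Fin n // u ≠ v ∧ b u v = i} =>
      (⟨⟨s((u, (0:Fin 2)), (v.1, (1:Fin 2))), edge_mem u v.1 v.2.1⟩,
        by rw [F_mk]; exact v.2.2, Sym2.mem_mk_left _ _⟩ :
        {e : (crown n).edgeSet // F b e = i ∧ (u, (0:Fin 2)) ∈ (e : Sym2 (Fin n × Fin 2))})) := by
    constructor
    · intro v w h
      have h2 : s((u,(0:Fin 2)),(v.1,(1:Fin 2))) = s((u,(0:Fin 2)),(w.1,(1:Fin 2))) :=
        congrArg (fun e => e.1.1) h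
      have h3 : (v.1, (1:Fin 2)) ∈ (s((u,(0:Fin 2)),(w.1,(1:Fin 2))) : Sym2 (Fin n × Fin 2)) :=
        h2 ▸ Sym2.mem_mk_right _ _
      rw [Sym2.mem_iff] at h3
      rcases h3 with h3 | h3
      · exact absurd (congrArg Prod.snd h3) f10
      · exact Subtype.ext (congrArg Prod.fst h3)
    · rintro ⟨⟨E, hE⟩, hF, hm⟩
      revert hE hF hm
      induction E using Sym2.ind with
      | _ x y =>
        intro hE hF hm
        obtain ⟨x1, x2⟩ := x
        obtain ⟨y1, y2⟩ := y
        have hE' := hE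
        rw [SimpleGraph.mem_edgeSet, crown_adj] at hE'
        obtain ⟨hne, hne2⟩ := hE'
        simp only [Sym2.mem_iff, Prod.mk.injEq] at hm
        simp only at hne hne2
        rcases (show x2 = 0 ∨ x2 = 1 by omega) with rfl | rfl <;>
          rcases (show y2 = 0 ∨ y2 = 1 by omega) with rfl | rfl
        · exact absurd rfl hne2
        · -- x2 = 0, y2 = 1
          have hu : x1 = u := by
            rcases hm with ⟨h, -⟩ | ⟨-, h⟩
            · exact h.symm
            · exact absurd h f01
          subst hu
          have hbv : b x1 y1 = i := by rw [F_mk] at hF; exact hF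
          exact ⟨⟨y1, hne, hbv⟩, rfl⟩
        · -- x2 = 1, y2 = 0
          have hu : y1 = u := by
            rcases hm with ⟨-, h⟩ | ⟨h, -⟩
            · exact absurd h f01
            · exact h.symm
          subst hu
          have hbv : b y1 x1 = i := by
            have h5 : F b ⟨s((y1, (0:Fin 2)), (x1, (1:Fin 2))), edge_mem _ _ (Ne.symm hne)⟩ = i := by
              rw [← hF]; congr 1; exact Subtype.ext (Sym2.eq_swap)
            rwa [F_mk] at h5
          refine ⟨⟨x1, Ne.symm hne, hbv⟩, ?_⟩
          exact Subtype.ext (Subtype.ext Sym2.eq_swap)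
        · exact absurd rfl hne2
  rw [labDeg, ← Nat.card_eq_of_bijective _ hb, Nat.card_eq_fintype_card, Fintype.card_subtype]

lemma labDeg_col (i : ZMod 2) (w : Fin n) :
    labDeg (crown n) (F b) i (w, (1:Fin 2)) =
      #(univ.filter fun u : Fin n => u ≠ w ∧ b u w = i) := by
  have hb : Function.Bijective (fun u : {u : Fin n // u ≠ w ∧ b u w = i} =>
      (⟨⟨s((u.1, (0:Fin 2)), (w, (1:Fin 2))), edge_mem u.1 w u.2.1⟩,
        by rw [F_mk]; exact u.2.2, Sym2.mem_mk_right _ _⟩ :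
        {e : (crown n).edgeSet // F b e = i ∧ (w, (1:Fin 2)) ∈ (e : Sym2 (Fin n × Fin 2))})) := by
    constructor
    · intro v v' h
      have h2 : s((v.1,(0:Fin 2)),(w,(1:Fin 2))) = s((v'.1,(0:Fin 2)),(w,(1:Fin 2))) :=
        congrArg (fun e => e.1.1) h
      have h3 : (v.1, (0:Fin 2)) ∈ (s((v'.1,(0:Fin 2)),(w,(1:Fin 2))) : Sym2 (Fin n × Fin 2)) :=
        h2 ▸ Sym2.mem_mk_left _ _
      rw [Sym2.mem_iff] at h3
      rcases h3 with h3 | h3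
      · exact Subtype.ext (congrArg Prod.fst h3)
      · exact absurd (congrArg Prod.snd h3) f01
    · rintro ⟨⟨E, hE⟩, hF, hm⟩
      revert hE hF hm
      induction E using Sym2.ind with
      | _ x y =>
        intro hE hF hm
        obtain ⟨x1, x2⟩ := x
        obtain ⟨y1, y2⟩ := y
        have hE' := hE
        rw [SimpleGraph.mem_edgeSet, crown_adj] at hE'
        obtain ⟨hne, hne2⟩ := hE'
        simp only [Sym2.mem_iff, Prod.mk.injEq] at hm
        simp only at hne hne2
        rcases (show x2 = 0 ∨ x2 = 1 by omega) with rfl | rfl <;>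
          rcases (show y2 = 0 ∨ y2 = 1 by omega) with rfl | rfl
        · exact absurd rfl hne2
        · -- x2 = 0, y2 = 1 : w = y1
          have hu : y1 = w := by
            rcases hm with ⟨-, h⟩ | ⟨h, -⟩
            · exact absurd h f10
            · exact h.symm
          subst hu
          have hbv : b x1 y1 = i := by rw [F_mk] at hF; exact hF
          exact ⟨⟨x1, hne, hbv⟩, rfl⟩
        · -- x2 = 1, y2 = 0 : w = x1
          have hu : x1 = w := by
            rcases hm with ⟨h, -⟩ | ⟨-, h⟩
            · exact h.symm
            · exact absurd h f10
          subst hu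
          have hbv : b y1 x1 = i := by
            have h5 : F b ⟨s((y1, (0:Fin 2)), (x1, (1:Fin 2))), edge_mem _ _ (Ne.symm hne)⟩ = i := by
              rw [← hF]; congr 1; exact Subtype.ext (Sym2.eq_swap)
            rwa [F_mk] at h5
          refine ⟨⟨y1, Ne.symm hne, hbv⟩, ?_⟩
          exact Subtype.ext (Subtype.ext Sym2.eq_swap)
        · exact absurd rfl hne2
  rw [labDeg, ← Nat.card_eq_of_bijective _ hb, Nat.card_eq_fintype_card, Fintype.card_subtype]

lemma edgeCount_pairs (i : ZMod 2) :
    edgeCount (crown n) (F b) i =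
      #(univ.filter fun p : Fin n × Fin n => p.1 ≠ p.2 ∧ b p.1 p.2 = i) := by
  have hb : Function.Bijective (fun p : {p : Fin n × Fin n // p.1 ≠ p.2 ∧ b p.1 p.2 = i} =>
      (⟨⟨s((p.1.1, (0:Fin 2)), (p.1.2, (1:Fin 2))), edge_mem p.1.1 p.1.2 p.2.1⟩,
        by rw [F_mk]; exact p.2.2⟩ :
        {e : (crown n).edgeSet // F b e = i})) := by
    constructor
    · intro p q h
      have h2 : s((p.1.1,(0:Fin 2)),(p.1.2,(1:Fin 2))) = s((q.1.1,(0:Fin 2)),(q.1.2,(1:Fin 2))) :=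
        congrArg (fun e => e.1.1) h
      have h3 : (p.1.1, (0:Fin 2)) ∈ (s((q.1.1,(0:Fin 2)),(q.1.2,(1:Fin 2))) : Sym2 (Fin n × Fin 2)) :=
        h2 ▸ Sym2.mem_mk_left _ _
      have h4 : (p.1.2, (1:Fin 2)) ∈ (s((q.1.1,(0:Fin 2)),(q.1.2,(1:Fin 2))) : Sym2 (Fin n × Fin 2)) :=
        h2 ▸ Sym2.mem_mk_right _ _
      rw [Sym2.mem_iff] at h3 h4
      have e1 : p.1.1 = q.1.1 := by
        rcases h3 with h3 | h3
        · exact (Prod.ext_iff.mp h3).1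
        · exact absurd (Prod.ext_iff.mp h3).2 f01
      have e2 : p.1.2 = q.1.2 := by
        rcases h4 with h4 | h4
        · exact absurd (Prod.ext_iff.mp h4).2 f10
        · exact (Prod.ext_iff.mp h4).1
      exact Subtype.ext (Prod.ext e1 e2)
    · rintro ⟨⟨E, hE⟩, hF⟩
      revert hE hF
      induction E using Sym2.ind with
      | _ x y =>
        intro hE hF
        obtain ⟨x1, x2⟩ := x
        obtain ⟨y1, y2⟩ := y
        have hE' := hE
        rw [SimpleGraph.mem_edgeSet, crown_adj] at hE'
        obtain ⟨hne, hne2⟩ := hE'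
        simp only at hne hne2
        rcases (show x2 = 0 ∨ x2 = 1 by omega) with rfl | rfl <;>
          rcases (show y2 = 0 ∨ y2 = 1 by omega) with rfl | rfl
        · exact absurd rfl hne2
        · have hbv : b x1 y1 = i := by rw [F_mk] at hF; exact hF
          exact ⟨⟨(x1, y1), hne, hbv⟩, rfl⟩
        · have hbv : b y1 x1 = i := by
            have h5 : F b ⟨s((y1, (0:Fin 2)), (x1, (1:Fin 2))), edge_mem _ _ (Ne.symm hne)⟩ = i := by
              rw [← hF]; congr 1; exact Subtype.ext (Sym2.eq_swap)
            rwa [F_mk] at h5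
          exact ⟨⟨(y1, x1), Ne.symm hne, hbv⟩, Subtype.ext (Subtype.ext Sym2.eq_swap)⟩
        · exact absurd rfl hne2
  rw [edgeCount, ← Nat.card_eq_of_bijective _ hb, Nat.card_eq_fintype_card, Fintype.card_subtype]

lemma vertexCount_eq (f : (crown n).edgeSet → ZMod 2) (i : ZMod 2) :
    vertexCount (crown n) f i =
      #(univ.filter fun w : Fin n × Fin 2 =>
        labDeg (crown n) f (1 - i) w < labDeg (crown n) f i w) := by
  rw [vertexCount, Nat.card_eq_fintype_card, Fintype.card_subtype]

lemma card_split (p : Fin n → Prop) [DecidablePred p] (g : Fin n → ZMod 2) :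
    #(univ.filter fun v => p v ∧ g v = 0) + #(univ.filter fun v => p v ∧ g v = 1)
      = #(univ.filter p) := by
  have h2 : ∀ x : ZMod 2, (¬ x = 0) ↔ x = 1 := by decide
  have h3 : filter (fun v => g v = 1) (univ.filter p) = filter (fun v => ¬ g v = 0) (univ.filter p) := by
    apply filter_congr
    intro x _
    simp [h2]
  rw [← filter_filter, ← filter_filter, h3, card_filter_add_card_filter_not]

lemma card_ne (u : Fin n) : #(univ.filter fun v : Fin n => u ≠ v) = n - 1 := by
  have : (univ.filter fun v : Fin n => u ≠ v) = univ.erase u := by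
    ext v
    simp [eq_comm, Ne]
  rw [this, card_erase_of_mem (mem_univ u), card_univ, Fintype.card_fin]

lemma card_val_Ico (a c : ℕ) (hc : c ≤ n) :
    #(univ.filter fun u : Fin n => a ≤ (u:ℕ) ∧ (u:ℕ) < c) = c - a := by
  rw [← Nat.card_Ico a c]
  refine card_bij' (fun (u : Fin n) _ => (u : ℕ))
    (fun t ht => (⟨t, lt_of_lt_of_le (mem_Ico.mp ht).2 hc⟩ : Fin n)) ?_ ?_ ?_ ?_
  · intro u hu; simp only [mem_filter, mem_univ, true_and] at hu; exact mem_Ico.mpr hu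
  · intro t ht; simp only [mem_filter, mem_univ, true_and]
    exact ⟨(mem_Ico.mp ht).1, (mem_Ico.mp ht).2⟩
  · intro u hu; rfl
  · intro t ht; rfl

lemma card_fiber (P : Fin n × Fin n → Prop) [DecidablePred P] (u : Fin n) :
    #((univ.filter P).filter fun p => p.1 = u) = #(univ.filter fun v => P (u, v)) := by
  refine card_bij' (fun p _ => p.2) (fun v _ => (u, v)) ?_ ?_ ?_ ?_
  · rintro ⟨p1, p2⟩ hp
    simp only [mem_filter, mem_univ, true_and] at hp ⊢
    obtain ⟨h1, rfl⟩ := hp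
    exact h1
  · intro v hv
    simp only [mem_filter, mem_univ, true_and] at hv
    exact mem_filter.mpr ⟨mem_filter.mpr ⟨mem_univ _, hv⟩, rfl⟩
  · rintro ⟨p1, p2⟩ hp
    simp only [mem_filter, mem_univ, true_and] at hp
    obtain ⟨-, h⟩ := hp
    exact Prod.ext h.symm rfl
  · intro v hv; rfl

lemma edgeCount_sum (i : ZMod 2) :
    edgeCount (crown n) (F b) i = ∑ u : Fin n, #(univ.filter fun v => u ≠ v ∧ b u v = i) := by
  rw [edgeCount_pairs,
    card_eq_sum_card_fiberwise (f := Prod.fst) (t := univ) (fun x _ => mem_univ _)]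
  exact Finset.sum_congr rfl fun u _ => card_fiber (fun p => p.1 ≠ p.2 ∧ b p.1 p.2 = i) u

lemma mod_sub_small {m x : ℕ} (h1 : m ≤ x) (h2 : x < 2*m) : x % m = x - m := by
  rw [Nat.mod_eq_sub_mod h1]
  exact Nat.mod_eq_of_lt (by omega)

lemma modL1 {m a t : ℕ} (ha : a < m) (ht : t < m) : ((a + t) % m + m - a) % m = t := by
  rcases lt_or_ge (a + t) m with h | h
  · rw [Nat.mod_eq_of_lt h, show a + t + m - a = t + m by omega, Nat.add_mod_right,
      Nat.mod_eq_of_lt ht]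
  · rw [mod_sub_small h (by omega), show a + t - m + m - a = t by omega, Nat.mod_eq_of_lt ht]

lemma modL2 {m a b : ℕ} (ha : a < m) (hb : b < m) : (a + (b + m - a) % m) % m = b := by
  rcases le_or_gt a b with h | h
  · rw [mod_sub_small (show m ≤ b + m - a by omega) (show b + m - a < 2*m by omega),
      show a + (b + m - a - m) = b by omega, Nat.mod_eq_of_lt hb]
  · rw [Nat.mod_eq_of_lt (show b + m - a < m by omega), show a + (b + m - a) = b + m by omega,
      Nat.add_mod_right, Nat.mod_eq_of_lt hb]

lemma modL3 {m b t : ℕ} (hb : b < m) (ht : t < m) : (b + m - (b + m - t) % m) % m = t := by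
  rcases le_or_gt t b with h | h
  · rw [mod_sub_small (show m ≤ b + m - t by omega) (show b + m - t < 2*m by omega),
      show b + m - (b + m - t - m) = t + m by omega,
      Nat.add_mod_right, Nat.mod_eq_of_lt ht]
  · rw [Nat.mod_eq_of_lt (show b + m - t < m by omega), show b + m - (b + m - t) = t by omega,
      Nat.mod_eq_of_lt ht]

/-! ### The labeling for odd `n ≥ 7` -/

def baseG (n : ℕ) : Fin n → Fin n → ZMod 2 := fun u v =>
  if 2 ≤ (u:ℕ) ∧ 2 ≤ (v:ℕ) then
    (if 1 ≤ ((v:ℕ) + (n-2) - (u:ℕ)) % (n-2) ∧ ((v:ℕ) + (n-2) - (u:ℕ)) % (n-2) ≤ (n+1)/2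
        ∧ ¬((u:ℕ) = 2 ∧ (v:ℕ) = 3) then 0 else 1)
  else if ((u:ℕ) = 1 ∧ (v:ℕ) = 3) ∨ ((u:ℕ) = 2 ∧ (v:ℕ) = 1) then 0 else 1

lemma baseG_zero_iff {n : ℕ} (u v : Fin n) :
    baseG n u v = 0 ↔
      ((2 ≤ (u:ℕ) ∧ 2 ≤ (v:ℕ)) ∧ (1 ≤ ((v:ℕ) + (n-2) - (u:ℕ)) % (n-2)
          ∧ ((v:ℕ) + (n-2) - (u:ℕ)) % (n-2) ≤ (n+1)/2 ∧ ¬((u:ℕ) = 2 ∧ (v:ℕ) = 3)))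
      ∨ (¬(2 ≤ (u:ℕ) ∧ 2 ≤ (v:ℕ)) ∧ (((u:ℕ) = 1 ∧ (v:ℕ) = 3) ∨ ((u:ℕ) = 2 ∧ (v:ℕ) = 1))) := by
  unfold baseG
  split_ifs with h1 h2 h3
  · exact iff_of_true rfl (Or.inl ⟨h1, h2⟩)
  · exact iff_of_false (by decide) (by tauto)
  · exact iff_of_true rfl (Or.inr ⟨h1, h3⟩)
  · exact iff_of_false (by decide) (by tauto)

lemma rowG0 {n : ℕ} (u : Fin n) (hu : (u:ℕ) = 0) :
    #(univ.filter fun v : Fin n => u ≠ v ∧ baseG n u v = 0) = 0 := by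
  rw [Finset.card_eq_zero, filter_eq_empty_iff]
  intro v _
  rw [ne_eq, Fin.ext_iff, baseG_zero_iff, hu]
  rintro ⟨-, ⟨⟨h, -⟩, -⟩ | ⟨-, ⟨h, -⟩ | ⟨h, -⟩⟩⟩ <;> omega

lemma rowG1 {n : ℕ} (hn : 7 ≤ n) (u : Fin n) (hu : (u:ℕ) = 1) :
    #(univ.filter fun v : Fin n => u ≠ v ∧ baseG n u v = 0) = 1 := by
  have h3 : (univ.filter fun v : Fin n => u ≠ v ∧ baseG n u v = 0)
      = {(⟨3, by omega⟩ : Fin n)} := by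
    ext v
    simp only [mem_filter, mem_univ, true_and, mem_singleton]
    rw [ne_eq, Fin.ext_iff, baseG_zero_iff, hu, Fin.ext_iff]
    constructor
    · rintro ⟨-, ⟨⟨h, -⟩, -⟩ | ⟨-, ⟨-, h3⟩ | ⟨h, -⟩⟩⟩
      · omega
      · exact h3.trans rfl
      · omega
    · intro hv
      have hv' : (v:ℕ) = 3 := hv
      exact ⟨by omega, Or.inr ⟨by omega, Or.inl ⟨rfl, hv'⟩⟩⟩
  rw [h3, card_singleton]

lemma card_Icc1K (K : ℕ) : #(Finset.Icc 1 K) = K := by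
  rw [Nat.card_Icc]; omega

lemma rowGK {n : ℕ} (hn : 7 ≤ n) (u : Fin n) (hu : 2 ≤ (u:ℕ)) (hu2 : (u:ℕ) ≠ 2) :
    #(univ.filter fun v : Fin n => u ≠ v ∧ baseG n u v = 0) = (n+1)/2 := by
  have hun : (u:ℕ) < n := u.isLt
  have hfc : (univ.filter fun v : Fin n => u ≠ v ∧ baseG n u v = 0)
      = univ.filter (fun v : Fin n => 2 ≤ (v:ℕ) ∧
          1 ≤ ((v:ℕ) + (n-2) - (u:ℕ)) % (n-2) ∧ ((v:ℕ) + (n-2) - (u:ℕ)) % (n-2) ≤ (n+1)/2) := by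
    apply filter_congr
    intro v _
    rw [ne_eq, Fin.ext_iff, baseG_zero_iff]
    rcases eq_or_ne (v:ℕ) (u:ℕ) with he | he
    · have hd : ((v:ℕ) + (n-2) - (u:ℕ)) % (n-2) = 0 := by
        rw [he, show (u:ℕ) + (n-2) - (u:ℕ) = n-2 by omega, Nat.mod_self]
      rw [hd]
      constructor
      · rintro ⟨hne, -⟩; omega
      · rintro ⟨-, h, -⟩; omega
    · constructor
      · rintro ⟨-, ⟨⟨-, h2v⟩, h1, h2, -⟩ | ⟨-, ⟨h, -⟩ | ⟨h, -⟩⟩⟩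
        · exact ⟨h2v, h1, h2⟩
        · omega
        · omega
      · rintro ⟨h2v, h1, h2⟩
        exact ⟨by omega, Or.inl ⟨⟨hu, h2v⟩, h1, h2, by omega⟩⟩
  rw [hfc]
  conv_rhs => rw [← card_Icc1K ((n+1)/2)]
  refine card_bij' (fun v _ => ((v:ℕ) + (n-2) - (u:ℕ)) % (n-2))
    (fun t ht => (⟨2 + (((u:ℕ)-2) + t) % (n-2), by
      have := Nat.mod_lt (((u:ℕ)-2) + t) (show 0 < n-2 by omega); omega⟩ : Fin n)) ?_ ?_ ?_ ?_
  · intro v hv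
    simp only [mem_filter, mem_univ, true_and] at hv
    exact mem_Icc.mpr ⟨hv.2.1, hv.2.2⟩
  · intro t ht
    rw [mem_Icc] at ht
    simp only [mem_filter, mem_univ, true_and]
    have hd : ((2 + (((u:ℕ)-2) + t) % (n-2)) + (n-2) - (u:ℕ)) % (n-2) = t := by
      rw [show (2 + (((u:ℕ)-2) + t) % (n-2)) + (n-2) - (u:ℕ)
          = (((u:ℕ)-2) + t) % (n-2) + (n-2) - ((u:ℕ)-2) by omega]
      exact modL1 (by omega) (by omega)
    show 2 ≤ 2 + (((u:ℕ)-2) + t) % (n-2)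
      ∧ 1 ≤ ((2 + (((u:ℕ)-2) + t) % (n-2)) + (n-2) - (u:ℕ)) % (n-2)
      ∧ ((2 + (((u:ℕ)-2) + t) % (n-2)) + (n-2) - (u:ℕ)) % (n-2) ≤ (n+1)/2
    rw [hd]
    omega
  · intro v hv
    simp only [mem_filter, mem_univ, true_and] at hv
    apply Fin.ext
    show 2 + (((u:ℕ)-2) + ((v:ℕ) + (n-2) - (u:ℕ)) % (n-2)) % (n-2) = (v:ℕ)
    rw [show (v:ℕ) + (n-2) - (u:ℕ) = ((v:ℕ)-2) + (n-2) - ((u:ℕ)-2) by omega,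
      modL2 (show (u:ℕ)-2 < n-2 by omega) (show (v:ℕ)-2 < n-2 by omega)]
    omega
  · intro t ht
    rw [mem_Icc] at ht
    show ((2 + (((u:ℕ)-2) + t) % (n-2)) + (n-2) - (u:ℕ)) % (n-2) = t
    rw [show (2 + (((u:ℕ)-2) + t) % (n-2)) + (n-2) - (u:ℕ)
        = (((u:ℕ)-2) + t) % (n-2) + (n-2) - ((u:ℕ)-2) by omega]
    exact modL1 (by omega) (by omega)

lemma filter_val_eq {n : ℕ} (a : ℕ) (ha : a < n) :
    univ.filter (fun v : Fin n => (v:ℕ) = a) = {(⟨a, ha⟩ : Fin n)} := by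
  ext v
  simp only [mem_filter, mem_univ, true_and, mem_singleton]
  exact ⟨fun h => Fin.ext h, fun h => by rw [h]⟩

lemma rowG2 {n : ℕ} (hn : 7 ≤ n) (u : Fin n) (hu : (u:ℕ) = 2) :
    #(univ.filter fun v : Fin n => u ≠ v ∧ baseG n u v = 0) = (n+1)/2 := by
  have hfc : (univ.filter fun v : Fin n => u ≠ v ∧ baseG n u v = 0)
      = univ.filter (fun v : Fin n =>
          (4 ≤ (v:ℕ) ∧ (v:ℕ) < (n+1)/2 + 3) ∨ (v:ℕ) = 1) := by
    apply filter_congr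
    intro v _
    rw [ne_eq, Fin.ext_iff, baseG_zero_iff, hu]
    have hdv : 2 ≤ (v:ℕ) → ((v:ℕ) + (n-2) - 2) % (n-2) = (v:ℕ) - 2 := by
      intro h
      rw [show (v:ℕ) + (n-2) - 2 = ((v:ℕ)-2) + (n-2) by omega, Nat.add_mod_right,
        Nat.mod_eq_of_lt (by have := v.isLt; omega)]
    constructor
    · rintro ⟨hne, ⟨⟨-, h2v⟩, h1, h2, h3⟩ | ⟨-, ⟨h, -⟩ | ⟨-, hv1⟩⟩⟩
      · rw [hdv h2v] at h1 h2
        left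
        refine ⟨?_, by omega⟩
        rcases Nat.lt_or_ge (v:ℕ) 4 with h4 | h4
        · exfalso; omega
        · exact h4
      · omega
      · right; exact hv1
    · rintro (⟨h4, hK⟩ | h1)
      · refine ⟨by omega, Or.inl ⟨⟨le_refl 2, by omega⟩, ?_, ?_, by omega⟩⟩
        · rw [hdv (by omega)]; omega
        · rw [hdv (by omega)]; omega
      · exact ⟨by omega, Or.inr ⟨by omega, Or.inr ⟨rfl, h1⟩⟩⟩
  have hdis : Disjoint
      (univ.filter (fun v : Fin n => 4 ≤ (v:ℕ) ∧ (v:ℕ) < (n+1)/2 + 3))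
      (univ.filter (fun v : Fin n => (v:ℕ) = 1)) := by
    rw [Finset.disjoint_left]
    intro a ha hb
    simp only [mem_filter, mem_univ, true_and] at ha hb
    omega
  rw [hfc, filter_or, card_union_of_disjoint hdis,
    card_val_Ico 4 ((n+1)/2 + 3) (by omega), filter_val_eq 1 (by omega), card_singleton]
  omega

lemma colG0 {n : ℕ} (w : Fin n) (hw : (w:ℕ) = 0) :
    #(univ.filter fun u : Fin n => u ≠ w ∧ baseG n u w = 0) = 0 := by
  rw [Finset.card_eq_zero, filter_eq_empty_iff]
  intro u _
  rw [ne_eq, Fin.ext_iff, baseG_zero_iff, hw]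
  rintro ⟨-, ⟨⟨-, h⟩, -⟩ | ⟨-, ⟨-, h⟩ | ⟨-, h⟩⟩⟩ <;> omega

lemma colG1 {n : ℕ} (hn : 7 ≤ n) (w : Fin n) (hw : (w:ℕ) = 1) :
    #(univ.filter fun u : Fin n => u ≠ w ∧ baseG n u w = 0) = 1 := by
  have hfc : (univ.filter fun u : Fin n => u ≠ w ∧ baseG n u w = 0)
      = univ.filter (fun u : Fin n => (u:ℕ) = 2) := by
    apply filter_congr
    intro u _
    rw [ne_eq, Fin.ext_iff, baseG_zero_iff, hw]
    constructor
    · rintro ⟨-, ⟨⟨-, h⟩, -⟩ | ⟨-, ⟨-, h⟩ | ⟨h2, -⟩⟩⟩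
      · omega
      · omega
      · exact h2
    · intro h2
      exact ⟨by omega, Or.inr ⟨by omega, Or.inr ⟨h2, by omega⟩⟩⟩
  rw [hfc, filter_val_eq 2 (by omega), card_singleton]

lemma colGK {n : ℕ} (hn : 7 ≤ n) (w : Fin n) (hw : 2 ≤ (w:ℕ)) (hw3 : (w:ℕ) ≠ 3) :
    #(univ.filter fun u : Fin n => u ≠ w ∧ baseG n u w = 0) = (n+1)/2 := by
  have hwn : (w:ℕ) < n := w.isLt
  have hfc : (univ.filter fun u : Fin n => u ≠ w ∧ baseG n u w = 0)
      = univ.filter (fun u : Fin n => 2 ≤ (u:ℕ) ∧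
          1 ≤ ((w:ℕ) + (n-2) - (u:ℕ)) % (n-2) ∧ ((w:ℕ) + (n-2) - (u:ℕ)) % (n-2) ≤ (n+1)/2) := by
    apply filter_congr
    intro u _
    rw [ne_eq, Fin.ext_iff, baseG_zero_iff]
    rcases eq_or_ne (u:ℕ) (w:ℕ) with he | he
    · have hd : ((w:ℕ) + (n-2) - (u:ℕ)) % (n-2) = 0 := by
        rw [he, show (w:ℕ) + (n-2) - (w:ℕ) = n-2 by omega, Nat.mod_self]
      rw [hd]
      constructor
      · rintro ⟨hne, -⟩; omega
      · rintro ⟨-, h, -⟩; omega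
    · constructor
      · rintro ⟨-, ⟨⟨h2u, -⟩, h1, h2, -⟩ | ⟨-, ⟨-, h3⟩ | ⟨-, h1'⟩⟩⟩
        · exact ⟨h2u, h1, h2⟩
        · omega
        · omega
      · rintro ⟨h2u, h1, h2⟩
        exact ⟨by omega, Or.inl ⟨⟨h2u, hw⟩, h1, h2, by rintro ⟨-, h⟩; omega⟩⟩
  rw [hfc]
  conv_rhs => rw [← card_Icc1K ((n+1)/2)]
  refine card_bij' (fun u _ => ((w:ℕ) + (n-2) - (u:ℕ)) % (n-2))
    (fun t ht => (⟨2 + (((w:ℕ)-2) + (n-2) - t) % (n-2), by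
      have := Nat.mod_lt (((w:ℕ)-2) + (n-2) - t) (show 0 < n-2 by omega); omega⟩ : Fin n)) ?_ ?_ ?_ ?_
  · intro u hu
    simp only [mem_filter, mem_univ, true_and] at hu
    exact mem_Icc.mpr ⟨hu.2.1, hu.2.2⟩
  · intro t ht
    rw [mem_Icc] at ht
    simp only [mem_filter, mem_univ, true_and]
    have hd : ((w:ℕ) + (n-2) - (2 + (((w:ℕ)-2) + (n-2) - t) % (n-2))) % (n-2) = t := by
      rw [show (w:ℕ) + (n-2) - (2 + (((w:ℕ)-2) + (n-2) - t) % (n-2))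
          = ((w:ℕ)-2) + (n-2) - ((((w:ℕ)-2) + (n-2) - t) % (n-2)) by omega]
      exact modL3 (by omega) (by omega)
    show 2 ≤ 2 + (((w:ℕ)-2) + (n-2) - t) % (n-2)
      ∧ 1 ≤ ((w:ℕ) + (n-2) - (2 + (((w:ℕ)-2) + (n-2) - t) % (n-2))) % (n-2)
      ∧ ((w:ℕ) + (n-2) - (2 + (((w:ℕ)-2) + (n-2) - t) % (n-2))) % (n-2) ≤ (n+1)/2
    rw [hd]
    omega
  · intro u hu
    simp only [mem_filter, mem_univ, true_and] at hu
    apply Fin.ext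
    show 2 + (((w:ℕ)-2) + (n-2) - ((w:ℕ) + (n-2) - (u:ℕ)) % (n-2)) % (n-2) = (u:ℕ)
    rw [show (w:ℕ) + (n-2) - (u:ℕ) = ((w:ℕ)-2) + (n-2) - ((u:ℕ)-2) by omega,
      modL3 (show (w:ℕ)-2 < n-2 by omega) (show (u:ℕ)-2 < n-2 by have := u.isLt; omega)]
    omega
  · intro t ht
    rw [mem_Icc] at ht
    show ((w:ℕ) + (n-2) - (2 + (((w:ℕ)-2) + (n-2) - t) % (n-2))) % (n-2) = t
    rw [show (w:ℕ) + (n-2) - (2 + (((w:ℕ)-2) + (n-2) - t) % (n-2))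
        = ((w:ℕ)-2) + (n-2) - ((((w:ℕ)-2) + (n-2) - t) % (n-2)) by omega]
    exact modL3 (by omega) (by omega)

lemma colG3 {n : ℕ} (hn : 7 ≤ n) (w : Fin n) (hw : (w:ℕ) = 3) :
    #(univ.filter fun u : Fin n => u ≠ w ∧ baseG n u w = 0) = (n+1)/2 := by
  have hfc : (univ.filter fun u : Fin n => u ≠ w ∧ baseG n u w = 0)
      = univ.filter (fun u : Fin n =>
          (n+1-(n+1)/2 ≤ (u:ℕ) ∧ (u:ℕ) < n) ∨ (u:ℕ) = 1) := by
    apply filter_congr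
    intro u _
    have hun : (u:ℕ) < n := u.isLt
    rw [ne_eq, Fin.ext_iff, baseG_zero_iff, hw]
    rcases eq_or_ne (u:ℕ) 3 with he | he
    · constructor
      · rintro ⟨hne, -⟩; omega
      · rintro (⟨h, -⟩ | h) <;> omega
    · constructor
      · rintro ⟨-, ⟨⟨h2u, -⟩, h1, h2, h3⟩ | ⟨-, ⟨hu1, -⟩ | ⟨-, h13⟩⟩⟩
        · have hu2 : (u:ℕ) ≠ 2 := fun h => h3 ⟨h, rfl⟩
          have hu4 : 4 ≤ (u:ℕ) := by omega
          have hD : (3 + (n-2) - (u:ℕ)) % (n-2) = 3 + (n-2) - (u:ℕ) :=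
            Nat.mod_eq_of_lt (by omega)
          rw [hD] at h2
          left
          exact ⟨by omega, hun⟩
        · right; exact hu1
        · omega
      · rintro (⟨hA, hn'⟩ | h1)
        · have hu4 : 4 ≤ (u:ℕ) := by omega
          have hD : (3 + (n-2) - (u:ℕ)) % (n-2) = 3 + (n-2) - (u:ℕ) :=
            Nat.mod_eq_of_lt (by omega)
          refine ⟨by omega, Or.inl ⟨⟨by omega, by omega⟩, ?_, ?_, by rintro ⟨h, -⟩; omega⟩⟩
          · rw [hD]; omega
          · rw [hD]; omega
        · exact ⟨by omega, Or.inr ⟨by omega, Or.inl ⟨h1, rfl⟩⟩⟩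
  have hdis : Disjoint
      (univ.filter (fun u : Fin n => n+1-(n+1)/2 ≤ (u:ℕ) ∧ (u:ℕ) < n))
      (univ.filter (fun u : Fin n => (u:ℕ) = 1)) := by
    rw [Finset.disjoint_left]
    intro a ha hb
    simp only [mem_filter, mem_univ, true_and] at ha hb
    omega
  rw [hfc, filter_or, card_union_of_disjoint hdis,
    card_val_Ico (n+1-(n+1)/2) n (le_refl n), filter_val_eq 1 (by omega), card_singleton]
  omega

lemma card_ne' {n : ℕ} (w : Fin n) : #(univ.filter fun v : Fin n => v ≠ w) = n - 1 := by
  rw [filter_ne', card_erase_of_mem (mem_univ w), card_univ, Fintype.card_fin]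

lemma one_complement {n : ℕ} (p : Fin n → Prop) [DecidablePred p]
    (hp : #(univ.filter p) = n - 1) (g : Fin n → ZMod 2) :
    #(univ.filter fun v => p v ∧ g v = 1) = (n-1) - #(univ.filter fun v => p v ∧ g v = 0) := by
  have := card_split p g
  omega

lemma zmodtwo : ∀ x : ZMod 2, x = 0 ∨ x = 1 := by decide

lemma general_case {n : ℕ} (hodd : Odd n) (hn : 7 ≤ n) : 2 * n - 8 ∈ EBI (crown n) := by
  have hn0 : (0:ℕ) < n := by omega
  have hn1 : (1:ℕ) < n := by omega
  have hn3 : (3:ℕ) < n := by omega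
  -- row values
  have hrow0 : ∀ u : Fin n,
      #(univ.filter fun v : Fin n => u ≠ v ∧ baseG n u v = 0)
        = if (u:ℕ) = 0 then 0 else if (u:ℕ) = 1 then 1 else (n+1)/2 := by
    intro u
    by_cases h0 : (u:ℕ) = 0
    · rw [rowG0 u h0, if_pos h0]
    · rw [if_neg h0]
      by_cases h1 : (u:ℕ) = 1
      · rw [rowG1 hn u h1, if_pos h1]
      · rw [if_neg h1]
        by_cases h2 : (u:ℕ) = 2
        · exact rowG2 hn u h2
        · exact rowGK hn u (by omega) h2
  have hcol0 : ∀ w : Fin n,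
      #(univ.filter fun u : Fin n => u ≠ w ∧ baseG n u w = 0)
        = if (w:ℕ) = 0 then 0 else if (w:ℕ) = 1 then 1 else (n+1)/2 := by
    intro w
    by_cases h0 : (w:ℕ) = 0
    · rw [colG0 w h0, if_pos h0]
    · rw [if_neg h0]
      by_cases h1 : (w:ℕ) = 1
      · rw [colG1 hn w h1, if_pos h1]
      · rw [if_neg h1]
        by_cases h3 : (w:ℕ) = 3
        · exact colG3 hn w h3
        · exact colGK hn w (by omega) h3
  -- edge balance
  have hsum : ∀ i : ZMod 2, edgeCount (crown n) (F (baseG n)) i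
      = ∑ u : Fin n, #(univ.filter fun v : Fin n => u ≠ v ∧ baseG n u v = i) :=
    fun i => edgeCount_sum (baseG n) i
  have hrow1 : ∀ u : Fin n,
      #(univ.filter fun v : Fin n => u ≠ v ∧ baseG n u v = 1)
        = (n-1) - #(univ.filter fun v : Fin n => u ≠ v ∧ baseG n u v = 0) :=
    fun u => one_complement (fun v => u ≠ v) (card_ne u) (baseG n u)
  have hne01 : (⟨1, hn1⟩ : Fin n) ≠ ⟨0, hn0⟩ := by
    intro h
    exact absurd (congrArg Fin.val h) (by omega : (1:ℕ) ≠ 0)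
  have hsplit : ∀ f : Fin n → ℕ, ∑ u : Fin n, f u
      = (∑ u ∈ (univ.erase (⟨0, hn0⟩ : Fin n)).erase ⟨1, hn1⟩, f u)
        + f ⟨1, hn1⟩ + f ⟨0, hn0⟩ := by
    intro f
    rw [← Finset.sum_erase_add univ f (mem_univ (⟨0, hn0⟩ : Fin n)),
      ← Finset.sum_erase_add (univ.erase (⟨0, hn0⟩ : Fin n)) f
        (mem_erase.mpr ⟨hne01, mem_univ _⟩)]
  have hcardT : ((univ.erase (⟨0, hn0⟩ : Fin n)).erase ⟨1, hn1⟩).card = n - 2 := by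
    rw [card_erase_of_mem (mem_erase.mpr ⟨hne01, mem_univ _⟩),
      card_erase_of_mem (mem_univ _), card_univ, Fintype.card_fin]
    omega
  have hmemT : ∀ x ∈ (univ.erase (⟨0, hn0⟩ : Fin n)).erase ⟨1, hn1⟩,
      ¬(x:ℕ) = 0 ∧ ¬(x:ℕ) = 1 := by
    intro x hx
    rw [mem_erase, mem_erase] at hx
    constructor
    · exact fun h => hx.2.1 (Fin.ext h)
    · exact fun h => hx.1 (Fin.ext h)
  have he0 : edgeCount (crown n) (F (baseG n)) 0 = (n-2) * ((n+1)/2) + 1 := by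
    rw [hsum 0, hsplit]
    rw [Finset.sum_congr rfl (fun x hx => by
      rw [hrow0 x, if_neg (hmemT x hx).1, if_neg (hmemT x hx).2])]
    rw [Finset.sum_const, smul_eq_mul, hcardT, hrow0, hrow0]
    rw [if_neg (by omega : ¬(1:ℕ) = 0), if_pos rfl, if_pos rfl]
  have he1 : edgeCount (crown n) (F (baseG n)) 1 = (n-2) * ((n-1) - (n+1)/2) + (n-2) + (n-1) := by
    rw [hsum 1, hsplit]
    rw [Finset.sum_congr rfl (fun x hx => by
      rw [hrow1 x, hrow0 x, if_neg (hmemT x hx).1, if_neg (hmemT x hx).2])]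
    rw [Finset.sum_const, smul_eq_mul, hcardT, hrow1, hrow1, hrow0, hrow0]
    rw [if_neg (by omega : ¬(1:ℕ) = 0), if_pos rfl, if_pos rfl]
    omega
  have heq : edgeCount (crown n) (F (baseG n)) 0 = edgeCount (crown n) (F (baseG n)) 1 := by
    rw [he0, he1]
    obtain ⟨k, hk⟩ := hodd
    obtain ⟨j, hj⟩ : ∃ j, k = j + 3 := ⟨k - 3, by omega⟩
    rw [show (n+1)/2 = j + 4 by omega, show n - 2 = 2*j + 5 by omega,
      show n - 1 - (j + 4) = j + 2 by omega, show n - 1 = 2*j + 6 by omega]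
    ring
  -- surjectivity
  have hsurj : Function.Surjective (F (baseG n)) := by
    intro i
    rcases zmodtwo i with rfl | rfl
    · refine ⟨⟨s(((⟨1, hn1⟩ : Fin n), 0), ((⟨3, hn3⟩ : Fin n), 1)),
        edge_mem _ _ (fun h => absurd (congrArg Fin.val h) (by omega : ¬(1:ℕ) = 3))⟩, ?_⟩
      rw [F_mk, baseG_zero_iff]
      exact Or.inr ⟨fun hh => absurd hh.1 (by omega : ¬(2:ℕ) ≤ 1), Or.inl ⟨rfl, rfl⟩⟩
    · refine ⟨⟨s(((⟨0, hn0⟩ : Fin n), 0), ((⟨1, hn1⟩ : Fin n), 1)),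
        edge_mem _ _ (fun h => absurd (congrArg Fin.val h) (by omega : ¬(0:ℕ) = 1))⟩, ?_⟩
      rw [F_mk]
      rcases zmodtwo (baseG n ⟨0, hn0⟩ ⟨1, hn1⟩) with h | h
      · exfalso
        rw [baseG_zero_iff] at h
        rcases h with ⟨⟨h, -⟩, -⟩ | ⟨-, ⟨h, -⟩ | ⟨h, -⟩⟩
        · exact absurd h (by omega : ¬(2:ℕ) ≤ 0)
        · exact absurd h (by omega : ¬(0:ℕ) = 1)
        · exact absurd h (by omega : ¬(0:ℕ) = 2)
      · exact h
  -- vertex counts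
  have hcol1 : ∀ w : Fin n,
      #(univ.filter fun u : Fin n => u ≠ w ∧ baseG n u w = 1)
        = (n-1) - #(univ.filter fun u : Fin n => u ≠ w ∧ baseG n u w = 0) :=
    fun w => one_complement (fun u => u ≠ w) (card_ne' w) (fun u => baseG n u w)
  have hpt : ∀ w : Fin n × Fin 2,
      (labDeg (crown n) (F (baseG n)) 1 w < labDeg (crown n) (F (baseG n)) 0 w)
        ↔ 2 ≤ (w.1:ℕ) := by
    rintro ⟨u, c⟩
    rw [show ((u, c).1) = u from rfl]
    rcases (show c = 0 ∨ c = 1 by omega) with rfl | rfl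
    · rw [labDeg_row, labDeg_row, hrow1 u, hrow0 u]
      by_cases h0 : (u:ℕ) = 0
      · rw [if_pos h0]; omega
      · rw [if_neg h0]
        by_cases h1 : (u:ℕ) = 1
        · rw [if_pos h1]; omega
        · rw [if_neg h1]; omega
    · rw [labDeg_col, labDeg_col, hcol1 u, hcol0 u]
      by_cases h0 : (u:ℕ) = 0
      · rw [if_pos h0]; omega
      · rw [if_neg h0]
        by_cases h1 : (u:ℕ) = 1
        · rw [if_pos h1]; omega
        · rw [if_neg h1]; omega
  have hprod0 : (univ : Finset (Fin n × Fin 2)).filter (fun w => 2 ≤ (w.1:ℕ))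
      = (univ.filter (fun u : Fin n => 2 ≤ (u:ℕ))) ×ˢ (univ : Finset (Fin 2)) := by
    ext ⟨a, c⟩
    simp only [mem_filter, mem_univ, true_and, mem_product, and_true]
  have hprod1 : (univ : Finset (Fin n × Fin 2)).filter
        (fun w => (0:ℕ) ≤ (w.1:ℕ) ∧ (w.1:ℕ) < 2)
      = (univ.filter (fun u : Fin n => (0:ℕ) ≤ (u:ℕ) ∧ (u:ℕ) < 2)) ×ˢ (univ : Finset (Fin 2)) := by
    ext ⟨a, c⟩
    simp only [mem_filter, mem_univ, true_and, mem_product, and_true]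
  have hvc0 : vertexCount (crown n) (F (baseG n)) 0 = (n - 2) * 2 := by
    rw [vertexCount_eq]
    have h10 : (1 - 0 : ZMod 2) = 1 := by decide
    simp only [h10]
    rw [filter_congr (fun w _ => hpt w), hprod0, card_product]
    rw [filter_congr (p := fun u : Fin n => 2 ≤ (u:ℕ))
      (q := fun u : Fin n => 2 ≤ (u:ℕ) ∧ (u:ℕ) < n)
      (fun u _ => ⟨fun h => ⟨h, u.isLt⟩, fun h => h.1⟩), card_val_Ico 2 n (le_refl n)]
    rw [card_univ, Fintype.card_fin]
  have hpt1 : ∀ w : Fin n × Fin 2,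
      (labDeg (crown n) (F (baseG n)) 0 w < labDeg (crown n) (F (baseG n)) 1 w)
        ↔ ((0:ℕ) ≤ (w.1:ℕ) ∧ (w.1:ℕ) < 2) := by
    rintro ⟨u, c⟩
    rw [show ((u, c).1) = u from rfl]
    have hu := u.isLt
    rcases (show c = 0 ∨ c = 1 by omega) with rfl | rfl
    · rw [labDeg_row, labDeg_row, hrow1 u, hrow0 u]
      by_cases h0 : (u:ℕ) = 0
      · rw [if_pos h0]; omega
      · rw [if_neg h0]
        by_cases h1 : (u:ℕ) = 1
        · rw [if_pos h1]; omega
        · rw [if_neg h1]; omega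
    · rw [labDeg_col, labDeg_col, hcol1 u, hcol0 u]
      by_cases h0 : (u:ℕ) = 0
      · rw [if_pos h0]; omega
      · rw [if_neg h0]
        by_cases h1 : (u:ℕ) = 1
        · rw [if_pos h1]; omega
        · rw [if_neg h1]; omega
  have hvc1 : vertexCount (crown n) (F (baseG n)) 1 = 2 * 2 := by
    rw [vertexCount_eq]
    have h11 : (1 - 1 : ZMod 2) = 0 := by decide
    simp only [h11]
    rw [filter_congr (fun w _ => hpt1 w), hprod1, card_product]
    rw [card_val_Ico 0 2 (by omega), card_univ, Fintype.card_fin]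
  refine ⟨F (baseG n), ⟨hsurj, ?_⟩, ?_⟩
  · rw [heq]
    simp
  · rw [ebIndex, hvc0, hvc1]
    omega

/-! ### The case `n = 5` -/

def base5 : Fin 5 → Fin 5 → ZMod 2 := fun u v =>
  if (u:ℕ) ≤ 1 ∨ (v:ℕ) = 3 then 0 else 1

lemma special_case : 2 * 5 - 8 ∈ EBI (crown 5) := by
  refine ⟨F base5, ⟨?_, ?_⟩, ?_⟩
  · intro i
    rcases zmodtwo i with rfl | rfl
    · exact ⟨⟨s(((0:Fin 5), (0:Fin 2)), ((1:Fin 5), (1:Fin 2))),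
        edge_mem _ _ (by decide)⟩, by rw [F_mk]; decide⟩
    · exact ⟨⟨s(((2:Fin 5), (0:Fin 2)), ((4:Fin 5), (1:Fin 2))),
        edge_mem _ _ (by decide)⟩, by rw [F_mk]; decide⟩
  · rw [edgeCount_pairs, edgeCount_pairs,
      show #(univ.filter fun p : Fin 5 × Fin 5 => p.1 ≠ p.2 ∧ base5 p.1 p.2 = 0) = 10 from by decide,
      show #(univ.filter fun p : Fin 5 × Fin 5 => p.1 ≠ p.2 ∧ base5 p.1 p.2 = 1) = 10 from by decide]
    norm_num
  · have hpt : ∀ w : Fin 5 × Fin 2,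
        (labDeg (crown 5) (F base5) 1 w < labDeg (crown 5) (F base5) 0 w)
          ↔ ((w.2 = 0 ∧ (w.1:ℕ) ≤ 1) ∨ (w.2 = 1 ∧ (w.1:ℕ) = 3)) := by
      rintro ⟨u, c⟩
      rw [show ((u, c).1) = u from rfl, show ((u, c).2) = c from rfl]
      rcases (show c = 0 ∨ c = 1 by omega) with rfl | rfl
      · rw [labDeg_row, labDeg_row]
        revert u
        decide
      · rw [labDeg_col, labDeg_col]
        revert u
        decide
    have hpt1 : ∀ w : Fin 5 × Fin 2,
        (labDeg (crown 5) (F base5) 0 w < labDeg (crown 5) (F base5) 1 w)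
          ↔ ((w.2 = 0 ∧ 2 ≤ (w.1:ℕ)) ∨ (w.2 = 1 ∧ ((w.1:ℕ) = 0 ∨ (w.1:ℕ) = 1))) := by
      rintro ⟨u, c⟩
      rw [show ((u, c).1) = u from rfl, show ((u, c).2) = c from rfl]
      rcases (show c = 0 ∨ c = 1 by omega) with rfl | rfl
      · rw [labDeg_row, labDeg_row]
        revert u
        decide
      · rw [labDeg_col, labDeg_col]
        revert u
        decide
    have hvc0 : vertexCount (crown 5) (F base5) 0 = 3 := by
      rw [vertexCount_eq]
      have h10 : (1 - 0 : ZMod 2) = 1 := by decide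
      simp only [h10]
      rw [filter_congr (fun w _ => hpt w)]
      decide
    have hvc1 : vertexCount (crown 5) (F base5) 1 = 5 := by
      rw [vertexCount_eq]
      have h11 : (1 - 1 : ZMod 2) = 0 := by decide
      simp only [h11]
      rw [filter_congr (fun w _ => hpt1 w)]
      decide
    rw [ebIndex, hvc0, hvc1]
    norm_num

end CrownAux

theorem crown_odd_max_attained (n : ℕ) (hodd : Odd n) (hn : 5 ≤ n) :
    2 * n - 8 ∈ EBI (crown n) := by
  rcases eq_or_ne n 5 with rfl | hne
  · exact CrownAux.special_case
  · have h7 : 7 ≤ n := by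
      obtain ⟨k, hk⟩ := hodd
      omega
    exact CrownAux.general_case hodd h7
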